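/- arXiv:2407.12178 — 2 statements merged into one kernel-verified Lean document; each statement's English description precedes it below -/
import Mathlib

section
/- Let μ'_N be the search time of the non-curricular policy that enumerates all N-tuples of positive integers in order of increasing sum, where the target tuple (a*_1, …, a*_N) has i.i.d. geometric(1/τ) coordinates. Then E[μ'_N] ≥ Σ_{n=N}^∞ s_{n-N} · C(n-1, N-1) (1-1/τ)^{n-N} (1/τ)^N where s_j = Σ_{i=1}^{j} C(N+i-2, N-1), and for τ > 1 and sufficiently large N, E[μ'_N] > Nτ + 1. -/
private lemma sum_choose_range (K m : ℕ) :
    ∑ i ∈ Finset.range m, Nat.choose (K + 1 + i - 1) (K + 1 - 1) = (m + K).choose (K + 1) := by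
  have h : ∀ i ∈ Finset.range m, Nat.choose (K + 1 + i - 1) (K + 1 - 1) = (i + K).choose K := by
    intro i _
    have h1 : K + 1 + i - 1 = i + K := by omega
    have h2 : K + 1 - 1 = K := by omega
    rw [h1, h2]
  rw [Finset.sum_congr rfl h]
  cases m with
  | zero => simp [Nat.choose_eq_zero_of_lt]
  | succ j =>
    rw [show j + 1 + K = j + K + 1 from by omega]
    exact Nat.sum_range_add_choose j K

private lemma choose_add_le_pow (a m : ℕ) : (m + a).choose a ≤ (m + 1) ^ a := by
  induction a with
  | zero => simp
  | succ a ih =>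
    have h := Nat.add_one_mul_choose_eq (m + a) a
    refine Nat.le_of_mul_le_mul_right ?_ (Nat.succ_pos a)
    calc (m + (a+1)).choose (a+1) * (a+1) = (m + a + 1) * (m + a).choose a := by
          rw [show m + (a+1) = m + a + 1 from rfl, ← h]
      _ ≤ ((m+1)*(a+1)) * ((m+1)^a) := Nat.mul_le_mul (by nlinarith) ih
      _ = (m+1)^(a+1) * (a+1) := by ring

private lemma choose_two_le_choose (n : ℕ) : ∀ a, 2 ≤ a → 2*a ≤ n → n.choose 2 ≤ n.choose a := by
  intro a h2
  induction a, h2 using Nat.le_induction with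
  | base => intro _; exact le_rfl
  | succ a ha ih =>
    intro hn
    exact le_trans (ih (by omega)) (Nat.choose_le_succ_of_lt_half_left (by omega))

private lemma key_choose (K m : ℕ) (hK : 5 ≤ K) (hm : 3 ≤ m) :
    2*(K+m) + 3 ≤ (m + 1 + K).choose (K+1) := by
  set n := m + 1 + K with hn
  have hn9 : 9 ≤ n := by omega
  have h2 : 2*(K+m)+3 ≤ n.choose 2 := by
    rw [Nat.choose_two_right]
    have hx : (2*n+1)*2 ≤ n*(n-1) := by nlinarith [Nat.sub_add_cancel (show 1 ≤ n by omega)]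
    omega
  rcases le_or_gt (2*(K+1)) n with h | h
  · exact le_trans h2 (choose_two_le_choose n (K+1) (by omega) h)
  · have hsym : n.choose m = n.choose (K+1) := by
      rw [show m = n - (K+1) from by omega]
      exact Nat.choose_symm (by omega)
    rw [← hsym]
    exact le_trans h2 (choose_two_le_choose n m (by omega) (by omega))

private lemma summable_succ_pow_mul (a : ℕ) {q : ℝ} (h0 : 0 < q) (h1 : q < 1) :
    Summable (fun m : ℕ => ((m : ℝ) + 1) ^ a * q ^ m) := by
  have hq : ‖q‖ < 1 := by rw [Real.norm_eq_abs, abs_of_pos h0]; exact h1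
  have h := (summable_pow_mul_geometric_of_norm_lt_one a hq).mul_left (1/q)
  have h2 := h.comp_injective Nat.succ_injective
  refine h2.congr fun m => ?_
  have hqne : q ≠ 0 := ne_of_gt h0
  simp only [Function.comp_apply, Nat.succ_eq_add_one]
  push_cast
  rw [pow_succ]
  field_simp

private lemma summable_of_poly_bound {q : ℝ} (h0 : 0 < q) (h1 : q < 1) (a : ℕ) (c : ℝ)
    {f : ℕ → ℝ} (hf0 : ∀ m, 0 ≤ f m)
    (hf : ∀ m, f m ≤ c * (((m:ℝ)+1)^a * q^m)) : Summable f :=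
  Summable.of_nonneg_of_le hf0 hf ((summable_succ_pow_mul a h0 h1).mul_left c)

/-- `S K m = C(m+K, K+1)` : closed form of the cumulative level counts. -/
private noncomputable def auxS (K m : ℕ) : ℝ := ((m + K).choose (K+1) : ℝ)

/-- `C K m = C(m+K, K)` : level sizes. -/
private noncomputable def auxC (K m : ℕ) : ℝ := ((m + K).choose K : ℝ)

/-- pmf weight. -/
private noncomputable def auxW (p q : ℝ) (K m : ℕ) : ℝ := auxC K m * q^m * p^(K+1)

/-- summand of `E (K+1)`. -/
private noncomputable def auxF (p q : ℝ) (K m : ℕ) : ℝ :=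
  ((auxS K m + auxS K (m+1) + 1)/2) * auxW p q K m

private lemma one_le_cast_succ (m : ℕ) : (1:ℝ) ≤ (m:ℝ)+1 := by
  have := Nat.cast_nonneg (α := ℝ) m; linarith

private lemma auxS_nonneg (K m : ℕ) : 0 ≤ auxS K m := by unfold auxS; positivity

private lemma auxW_nonneg {p q : ℝ} (hp : 0 ≤ p) (hq : 0 ≤ q) (K m : ℕ) :
    0 ≤ auxW p q K m := by
  unfold auxW auxC
  positivity

private lemma auxF_nonneg {p q : ℝ} (hp : 0 ≤ p) (hq : 0 ≤ q) (K m : ℕ) :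
    0 ≤ auxF p q K m := by
  have h1 := auxS_nonneg K m
  have h2 := auxS_nonneg K (m+1)
  have h3 := auxW_nonneg hp hq K m
  unfold auxF
  nlinarith

private lemma auxS_le_pow (K m : ℕ) : auxS K m ≤ ((m:ℝ)+1)^(K+1) := by
  unfold auxS
  have h1 : (m+K).choose (K+1) ≤ (m+(K+1)).choose (K+1) := Nat.choose_le_choose _ (by omega)
  have h2 := le_trans h1 (choose_add_le_pow (K+1) m)
  calc ((m + K).choose (K+1) : ℝ) ≤ ((m+1 : ℕ) : ℝ)^(K+1) := by exact_mod_cast h2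
    _ = ((m:ℝ)+1)^(K+1) := by push_cast; ring

private lemma auxS_succ_le_pow (K m : ℕ) : auxS K (m+1) ≤ ((m:ℝ)+1)^(K+1) := by
  unfold auxS
  have h2 : (m+1+K).choose (K+1) ≤ (m+1)^(K+1) := by
    have := choose_add_le_pow (K+1) m
    rwa [show m+(K+1) = m+1+K from by omega] at this
  calc ((m+1 + K).choose (K+1) : ℝ) ≤ ((m+1 : ℕ) : ℝ)^(K+1) := by exact_mod_cast h2
    _ = ((m:ℝ)+1)^(K+1) := by push_cast; ring

private lemma auxC_le_pow (K m : ℕ) : auxC K m ≤ ((m:ℝ)+1)^(K+1) := by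
  unfold auxC
  have h2 := choose_add_le_pow K m
  have h4 : ((m + K).choose K : ℝ) ≤ ((m:ℝ)+1)^K := by
    calc ((m + K).choose K : ℝ) ≤ ((m+1 : ℕ) : ℝ)^K := by exact_mod_cast h2
      _ = ((m:ℝ)+1)^K := by push_cast; ring
  calc ((m + K).choose K : ℝ) ≤ ((m:ℝ)+1)^K := h4
    _ ≤ ((m:ℝ)+1)^(K+1) := pow_le_pow_right₀ (one_le_cast_succ m) (by omega)

private lemma auxW_le_pow {p q : ℝ} (hp0 : 0 < p) (hp1 : p < 1) (hq : 0 ≤ q) (K m : ℕ) :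
    auxW p q K m ≤ ((m:ℝ)+1)^(K+1) * q^m := by
  unfold auxW
  have hC0 : 0 ≤ auxC K m := by unfold auxC; positivity
  have hCle := auxC_le_pow K m
  have hppow : p^(K+1) ≤ 1 := pow_le_one₀ hp0.le hp1.le
  have h1 : auxC K m * q^m ≤ ((m:ℝ)+1)^(K+1) * q^m :=
    mul_le_mul_of_nonneg_right hCle (by positivity)
  calc auxC K m * q^m * p^(K+1) ≤ (((m:ℝ)+1)^(K+1) * q^m) * 1 := by
        apply mul_le_mul h1 hppow (by positivity) (by positivity)
    _ = ((m:ℝ)+1)^(K+1) * q^m := by ring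

private lemma auxF_le {p q : ℝ} (hp0 : 0 < p) (hp1 : p < 1) (hq : 0 ≤ q) (K m : ℕ) :
    auxF p q K m ≤ 2 * (((m:ℝ)+1)^((K+1)+(K+1)) * q^m) := by
  unfold auxF
  set y : ℝ := ((m:ℝ)+1)^(K+1) with hy
  have hy1 : (1:ℝ) ≤ y := one_le_pow₀ (one_le_cast_succ m)
  have hA : (auxS K m + auxS K (m+1) + 1)/2 ≤ 2 * y := by
    have h1 := auxS_le_pow K m
    have h2 := auxS_succ_le_pow K m
    linarith
  have hWle := auxW_le_pow hp0 hp1 hq K m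
  have hW0 := auxW_nonneg hp0.le hq K m
  have hA0 : 0 ≤ (auxS K m + auxS K (m+1) + 1)/2 := by
    have := auxS_nonneg K m; have := auxS_nonneg K (m+1); linarith
  calc (auxS K m + auxS K (m+1) + 1)/2 * auxW p q K m
      ≤ (2 * y) * (y * q^m) := by
        apply mul_le_mul hA hWle hW0 (by positivity)
    _ = 2 * (((m:ℝ)+1)^((K+1)+(K+1)) * q^m) := by
        rw [hy, pow_add]; ring

private lemma auxSW_le {p q : ℝ} (hp0 : 0 < p) (hp1 : p < 1) (hq : 0 ≤ q) (K m : ℕ) :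
    auxS K m * auxW p q K m ≤ 1 * (((m:ℝ)+1)^((K+1)+(K+1)) * q^m) := by
  have h1 := auxS_le_pow K m
  have hWle := auxW_le_pow hp0 hp1 hq K m
  have hW0 := auxW_nonneg hp0.le hq K m
  calc auxS K m * auxW p q K m ≤ (((m:ℝ)+1)^(K+1)) * (((m:ℝ)+1)^(K+1) * q^m) :=
        mul_le_mul h1 hWle hW0 (by positivity)
    _ = 1 * (((m:ℝ)+1)^((K+1)+(K+1)) * q^m) := by rw [pow_add]; ring

/-- The expected search time of the non-curricular policy (indexing levels by
`m = n - N`, with `s N m = Σ_{i=1}^{m} C(N+i-2, N-1)` the cumulative level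
counts and expected guess index `(s_{m} + s_{m+1} + 1)/2` within level `m`)
is lower-bounded by `Σ_m s_m · C(N+m-1, N-1)(1-1/τ)^m (1/τ)^N`, and for `τ > 1`
and all sufficiently large `N` exceeds `Nτ + 1`. -/
theorem noncurricular_search_time (τ : ℝ) (hτ : 1 < τ)
    (s : ℕ → ℕ → ℕ)
    (hs : ∀ N m, s N m = ∑ i ∈ Finset.range m, Nat.choose (N + i - 1) (N - 1))
    (E : ℕ → ℝ)
    (hE : ∀ N, E N = ∑' m : ℕ,
      (((s N m : ℝ) + (s N (m+1) : ℝ) + 1)/2)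
        * (Nat.choose (N + m - 1) (N - 1) : ℝ) * (1 - 1/τ)^m * (1/τ)^N) :
    (∀ N, 1 ≤ N → E N ≥ ∑' m : ℕ,
        (s N m : ℝ) * (Nat.choose (N + m - 1) (N - 1) : ℝ)
          * (1 - 1/τ)^m * (1/τ)^N) ∧
    ∃ N₀ : ℕ, ∀ N > N₀, E N > N * τ + 1 := by
  have hτ0 : (0:ℝ) < τ := lt_trans one_pos hτ
  set p : ℝ := 1/τ with hpdef
  have hp0 : 0 < p := by positivity
  have hp1 : p < 1 := by rw [hpdef, div_lt_one hτ0]; exact hτ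
  set q : ℝ := 1 - p with hqdef
  have hq0 : 0 < q := by rw [hqdef]; linarith
  have hq1 : q < 1 := by rw [hqdef]; linarith
  have hqp : 1 - q = p := by rw [hqdef]; ring
  have hqn : ‖q‖ < 1 := by rw [Real.norm_eq_abs, abs_of_pos hq0]; exact hq1
  clear_value p q
  -- master rewriting of E
  have master : ∀ K : ℕ, E (K+1) = ∑' m : ℕ, auxF p q K m := by
    intro K
    rw [hE]
    refine tsum_congr fun m => ?_
    rw [hs, hs, sum_choose_range, sum_choose_range,
      show K+1+m-1 = m+K from by omega, Nat.add_sub_cancel]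
    unfold auxF auxW auxS auxC
    ring
  have masterlow : ∀ K : ℕ,
      (∑' m : ℕ, (s (K+1) m : ℝ) * ((Nat.choose (K+1+m-1) (K+1-1)) : ℝ) * q^m * p^(K+1))
        = ∑' m : ℕ, auxS K m * auxW p q K m := by
    intro K
    refine tsum_congr fun m => ?_
    rw [hs, sum_choose_range, show K+1+m-1 = m+K from by omega, Nat.add_sub_cancel]
    unfold auxW auxS auxC
    ring
  have hsumF : ∀ K : ℕ, Summable (auxF p q K) := fun K =>
    summable_of_poly_bound hq0 hq1 ((K+1)+(K+1)) 2
      (auxF_nonneg hp0.le hq0.le K) (auxF_le hp0 hp1 hq0.le K)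
  have hsumSW : ∀ K : ℕ, Summable (fun m => auxS K m * auxW p q K m) := fun K =>
    summable_of_poly_bound hq0 hq1 ((K+1)+(K+1)) 1
      (fun m => mul_nonneg (auxS_nonneg K m) (auxW_nonneg hp0.le hq0.le K m))
      (auxSW_le hp0 hp1 hq0.le K)
  have hsumW : ∀ K : ℕ, Summable (auxW p q K) := by
    intro K
    refine Summable.congr
      ((summable_choose_mul_geometric_of_norm_lt_one K hqn (r := q)).mul_right (p^(K+1)))
      fun m => ?_
    unfold auxW auxC
    ring
  have htsumW : ∀ K : ℕ, ∑' m : ℕ, auxW p q K m = 1 := by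
    intro K
    have e : ∀ m : ℕ, auxW p q K m = (((m+K).choose K : ℝ) * q^m) * p^(K+1) := by
      intro m; unfold auxW auxC; ring
    rw [tsum_congr e, tsum_mul_right, tsum_choose_mul_geometric_of_norm_lt_one K hqn, hqp]
    rw [one_div, inv_mul_cancel₀ (pow_ne_zero _ hp0.ne')]
  constructor
  · -- Part 1
    intro N hN
    obtain ⟨K, rfl⟩ : ∃ K, N = K + 1 := ⟨N - 1, by omega⟩
    rw [master K, ge_iff_le, masterlow K]
    refine Summable.tsum_le_tsum (fun m => ?_) (hsumSW K) (hsumF K)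
    unfold auxF
    have hW0 := auxW_nonneg hp0.le hq0.le K m
    have hmono : auxS K m ≤ auxS K (m+1) := by
      unfold auxS
      exact_mod_cast Nat.choose_le_choose (K+1) (by omega)
    nlinarith [auxS_nonneg K m]
  · -- Part 2
    refine ⟨Nat.ceil (8 / q^2) + 5, fun N hN => ?_⟩
    obtain ⟨K, rfl⟩ : ∃ K, N = K + 1 := ⟨N - 1, by omega⟩
    have hK5 : 5 ≤ K := by omega
    have hx8 : 8 < ((K:ℝ) - 1) * q^2 := by
      have hceil : (8 / q^2 : ℝ) ≤ (Nat.ceil (8 / q^2) : ℝ) := Nat.le_ceil _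
      have hKge : (Nat.ceil (8 / q^2) + 5 : ℕ) ≤ K := by omega
      have hKge' : ((Nat.ceil (8 / q^2) : ℝ) + 5) ≤ (K:ℝ) := by exact_mod_cast hKge
      have h1 : 8 / q^2 + 4 ≤ (K:ℝ) - 1 := by linarith
      have h3 : (8/q^2 + 4) * q^2 ≤ ((K:ℝ)-1) * q^2 :=
        mul_le_mul_of_nonneg_right h1 (by positivity)
      have hq2 : 0 < q^2 := by positivity
      have h5 : 8/q^2 < (K:ℝ)-1 := by linarith
      exact (div_lt_iff₀ hq2).mp h5
    have hx5 : (5:ℝ) ≤ (K:ℝ) := by exact_mod_cast hK5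
    -- the comparison sequence h m = (K + m + 2) * W m
    set h : ℕ → ℝ := fun m => ((K:ℝ) + (m:ℝ) + 2) * auxW p q K m with hhdef
    have hsum2 := summable_choose_mul_geometric_of_norm_lt_one (K+1) hqn (r := q)
    have he : ∀ m : ℕ, h m =
        ((K:ℝ)+1) * (((m+(K+1)).choose (K+1) : ℝ) * q^m) * p^(K+1) + auxW p q K m := by
      intro m
      have hnat := Nat.add_one_mul_choose_eq (m+K) K
      have hnat' : ((m+K+1 : ℕ) : ℝ) * (((m+K).choose K : ℕ) : ℝ)
          = (((m+K+1).choose (K+1) : ℕ) : ℝ) * ((K:ℝ)+1) := by exact_mod_cast hnat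
      simp only [hhdef]
      unfold auxW auxC
      rw [show m+(K+1) = m+K+1 from rfl]
      push_cast at hnat' ⊢
      linear_combination (q^m * p^(K+1)) * hnat'
    have hsumh : Summable h := by
      refine Summable.congr ?_ (fun m => (he m).symm)
      exact ((hsum2.mul_left ((K:ℝ)+1)).mul_right (p^(K+1))).add (hsumW K)
    have htsumh : ∑' m, h m = ((K:ℝ)+1) * τ + 1 := by
      rw [tsum_congr he, Summable.tsum_add (((hsum2.mul_left ((K:ℝ)+1)).mul_right (p^(K+1)))) (hsumW K),
        htsumW, tsum_mul_right, tsum_mul_left,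
        tsum_choose_mul_geometric_of_norm_lt_one (K+1) hqn, hqp]
      have hpne : p ≠ 0 := hp0.ne'
      have hτeq : τ = 1/p := by rw [hpdef]; field_simp
      rw [hτeq]
      field_simp
      ring
    -- values at 0, 1, 2
    have hS0 : auxS K 0 = 0 := by
      unfold auxS
      simp [Nat.choose_eq_zero_of_lt]
    have hS1 : auxS K 1 = 1 := by
      unfold auxS
      rw [show 1+K = K+1 from by omega, Nat.choose_self]
      norm_num
    have hS2 : auxS K 2 = (K:ℝ)+2 := by
      unfold auxS
      rw [show 2+K = K+2 from by omega, ← Nat.choose_symm (show K+1 ≤ K+2 from by omega),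
        show K+2-(K+1) = 1 from by omega, Nat.choose_one_right]
      push_cast; ring
    have hS3 : auxS K 3 = ((K:ℝ)+3)*((K:ℝ)+2)/2 := by
      unfold auxS
      rw [show 3+K = K+3 from by omega, ← Nat.choose_symm (show K+1 ≤ K+3 from by omega),
        show K+3-(K+1) = 2 from by omega, Nat.cast_choose_two]
      push_cast; ring
    have hC0 : auxC K 0 = 1 := by unfold auxC; simp
    have hC1 : auxC K 1 = (K:ℝ)+1 := by
      unfold auxC
      rw [show 1+K = K+1 from by omega, ← Nat.choose_symm (show K ≤ K+1 from by omega),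
        show K+1-K = 1 from by omega, Nat.choose_one_right]
      push_cast; ring
    have hC2 : auxC K 2 = ((K:ℝ)+2)*((K:ℝ)+1)/2 := by
      unfold auxC
      rw [show 2+K = K+2 from by omega, ← Nat.choose_symm (show K ≤ K+2 from by omega),
        show K+2-K = 2 from by omega, Nat.cast_choose_two]
      push_cast; ring
    -- the partial sum of (F - h) over range 3 is positive
    have hpP : 0 < p^(K+1) := by positivity
    have hpos : 0 < ∑ m ∈ Finset.range 3, (auxF p q K m - h m) := by
      rw [Finset.sum_range_succ, Finset.sum_range_succ, Finset.sum_range_one]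
      simp only [hhdef]
      unfold auxF auxW
      rw [hS0, hS1, hS2, hS3, hC0, hC1, hC2]
      push_cast
      set x : ℝ := (K:ℝ) with hxd
      clear_value x
      have hA : (0:ℝ) < (x+4)*(x+2)*(x+1)/8 :=
        div_pos (mul_pos (mul_pos (by linarith) (by linarith)) (by linarith)) (by norm_num)
      have hb2 : (x+4)*(x+2)*(x+1)/8 * ((x-1)*q^2) > (x+4)*(x+2)*(x+1)/8 * 8 :=
        mul_lt_mul_of_pos_left hx8 hA
      have hxx : (0:ℝ) ≤ (x+2)*(x+1) := mul_nonneg (by linarith) (by linarith)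
      have hb3 : (x+2)*(x+1)*q ≤ (x+2)*(x+1) := by nlinarith [hxx, hq1.le, hq0.le]
      have c1 : (0:ℝ) ≤ x*(x+1) := mul_nonneg (by linarith) (by linarith)
      have c2 : (0:ℝ) ≤ (x+3)*((x+2)*(x+1)) := mul_nonneg (by linarith) hxx
      have hbr : 0 < -(x+1) - (x+2)*(x+1)/2*q + (x+4)*(x-1)/4*((x+2)*(x+1)/2)*q^2 := by
        linarith [hb2, hb3, c1, c2]
      linarith [mul_pos hpP hbr]
    -- F - h is nonneg outside range 3
    have hge : ∀ m ∉ Finset.range 3, 0 ≤ auxF p q K m - h m := by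
      intro m hm
      have hm3 : 3 ≤ m := by
        simp only [Finset.mem_range, not_lt] at hm
        omega
      have hk := key_choose K m hK5 hm3
      have hSb : (2*((K:ℝ)+(m:ℝ))+3) ≤ auxS K (m+1) := by
        unfold auxS
        have h' : ((2*(K+m)+3 : ℕ) : ℝ) ≤ (((m+1+K).choose (K+1) : ℕ) : ℝ) := by
          exact_mod_cast hk
        push_cast at h'
        linarith
      have hW0 := auxW_nonneg hp0.le hq0.le K m
      have hS0' := auxS_nonneg K m
      have hcoef : (K:ℝ)+(m:ℝ)+2 ≤ (auxS K m + auxS K (m+1) + 1)/2 := by linarith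
      simp only [hhdef]
      unfold auxF
      have := mul_le_mul_of_nonneg_right hcoef hW0
      linarith
    -- assemble
    have hsub := (hsumF K).sub hsumh
    have hstep := Summable.sum_le_tsum (Finset.range 3) hge hsub
    have htdiff : ∑' m, (auxF p q K m - h m) = (∑' m, auxF p q K m) - ∑' m, h m :=
      Summable.tsum_sub (hsumF K) hsumh
    rw [master K]
    have hcast : ((K+1 : ℕ) : ℝ) = (K:ℝ)+1 := by push_cast; ring
    rw [hcast]
    linarith [hpos, hstep, htdiff, htsumh]
end

section
/- Define for α > 1, γ ∈ (0,1), τ ∈ (1, γ(α-1)/(2(1-γ))): L := (αγ/((1-γ)τ+γ)) · (((1-γ)τ+γ)/((1-γ)τ+(1-α)γ) + 1/(1-γ)). Then L > 0. -/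
/-- For `α > 1`, `γ ∈ (0,1)`, `τ ∈ (1, γ(α-1)/(2(1-γ)))`, the limiting value gap
`L := (αγ/((1-γ)τ+γ)) · (((1-γ)τ+γ)/((1-γ)τ+(1-α)γ) + 1/(1-γ))` is positive. -/
theorem limiting_gap_positive (α γ τ : ℝ) (hα : 1 < α) (hγ0 : 0 < γ) (hγ1 : γ < 1)
    (hτ1 : 1 < τ) (hτ2 : τ < γ*(α-1)/(2*(1-γ))) :
    0 < (α*γ/((1-γ)*τ+γ))
        * (((1-γ)*τ+γ)/((1-γ)*τ+(1-α)*γ) + 1/(1-γ)) := by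
  have h1γ : (0:ℝ) < 1 - γ := by linarith
  have hbound : 2*(1-γ)*τ < γ*(α-1) := by
    have h := (lt_div_iff₀ (by positivity : (0:ℝ) < 2*(1-γ))).mp hτ2
    nlinarith [h]
  have hA : 0 < (1-γ)*τ+γ := by nlinarith
  have hB : (1-γ)*τ+(1-α)*γ < 0 := by nlinarith
  have hfac : 0 < α*γ/((1-γ)*τ+γ) := by positivity
  refine mul_pos hfac ?_
  have key : ((1-γ)*τ+γ)/((1-γ)*τ+(1-α)*γ) + 1/(1-γ)
      = (((1-γ)*τ+γ)*(1-γ) + ((1-γ)*τ+(1-α)*γ)*1) / (((1-γ)*τ+(1-α)*γ)*(1-γ)) := by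
    rw [div_add_div _ _ hB.ne (ne_of_gt h1γ)]
  rw [key]
  apply div_pos_of_neg_of_neg
  · -- numerator negative
    nlinarith [hbound, mul_pos hγ0 h1γ, hτ1, hα, mul_pos (mul_pos hγ0 hγ0) (sub_pos.mpr hα)]
  · nlinarith
end
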